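/- arXiv:2411.17169 — 3 statements merged into one kernel-verified Lean document; each statement's English description precedes it below -/
import Mathlib

section
/- Let $a,b>0$, $1<p<2$, $1\le\theta$, $2\theta<q$, and $A,A',B>0$. Define $\Phi(t)=a t^{2-p}A+b t^{2\theta-p}A'-t^{q-p}B$ for $t>0$. Then $\lim_{t\to 0^+}\Phi(t)=0^+$ (i.e., $\Phi(t)>0$ for small $t>0$ and tends to $0$), $\lim_{t\to\infty}\Phi(t)=-\infty$, $\Phi$ attains a positive global maximum at a unique point $t_{\max}>0$, and for every $\mu$ with $0<\mu<\Phi(t_{\max})$ the equation $\Phi(t)=\mu$ has exactly two solutions $t^+<t_{\max}<t^-$. -/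
open Set Filter Topology

private lemma contAtRpow (r : ℝ) {t : ℝ} (ht : t ≠ 0) :
    ContinuousAt (fun s : ℝ => s ^ r) t :=
  Real.continuousAt_rpow_const t r (Or.inl ht)

private lemma tendsto_rpow_zero' (r : ℝ) (hr : 0 < r) :
    Tendsto (fun t : ℝ => t ^ r) (𝓝[>] (0:ℝ)) (𝓝 0) := by
  have h := (Real.continuousAt_rpow_const 0 r (Or.inr hr.le)).mono_left
    (nhdsWithin_le_nhds (s := Set.Ioi (0:ℝ)))
  simpa [Real.zero_rpow hr.ne'] using h

theorem stmt_1 (a b p θ q A A' B : ℝ) (ha : 0 < a) (hb : 0 < b)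
    (hp1 : 1 < p) (hp2 : p < 2) (hθ : 1 ≤ θ) (hθq : 2 * θ < q)
    (hA : 0 < A) (hA' : 0 < A') (hB : 0 < B)
    (Φ : ℝ → ℝ)
    (hΦ : ∀ t : ℝ, Φ t =
      a * t ^ (2 - p) * A + b * t ^ (2 * θ - p) * A' - t ^ (q - p) * B) :
    Tendsto Φ (𝓝[>] (0 : ℝ)) (𝓝 0) ∧
    (∀ᶠ t in 𝓝[>] (0 : ℝ), 0 < Φ t) ∧
    Tendsto Φ atTop atBot ∧
    ∃ tmax : ℝ, 0 < tmax ∧ 0 < Φ tmax ∧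
      (∀ t : ℝ, 0 < t → t ≠ tmax → Φ t < Φ tmax) ∧
      ∀ μ : ℝ, 0 < μ → μ < Φ tmax →
        ∃ tp tm : ℝ, 0 < tp ∧ tp < tmax ∧ tmax < tm ∧
          Φ tp = μ ∧ Φ tm = μ ∧
          ∀ t : ℝ, 0 < t → Φ t = μ → t = tp ∨ t = tm := by
  have hΦfun : Φ = fun t : ℝ =>
      a * t ^ (2 - p) * A + b * t ^ (2 * θ - p) * A' - t ^ (q - p) * B :=
    funext hΦ
  subst hΦfun
  -- basic exponent facts
  have h2θ : (2:ℝ) ≤ 2 * θ := by linarith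
  have hr1 : (0:ℝ) < 2 - p := by linarith
  have hr2 : (0:ℝ) < 2 * θ - p := by linarith
  have hr3 : (0:ℝ) < q - p := by linarith
  have hq2 : (0:ℝ) < q - 2 := by linarith
  -- abbreviations
  set α : ℝ := 2 * θ - 2 with hα_def
  set β : ℝ := q - 2 * θ with hβ_def
  have hα : 0 ≤ α := by simp [hα_def]; linarith
  have hβ : 0 < β := by simp [hβ_def]; linarith
  set c1 : ℝ := a * (2 - p) * A with hc1_def
  set c2 : ℝ := b * (2 * θ - p) * A' with hc2_def
  set c3 : ℝ := (q - p) * B with hc3_def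
  have hc1 : 0 < c1 := by positivity
  have hc2 : 0 < c2 := by positivity
  have hc3 : 0 < c3 := by positivity
  set g : ℝ → ℝ := fun t => c1 + c2 * t ^ α - c3 * t ^ (α + β) with hg_def
  set G : ℝ → ℝ := fun t => c1 * t ^ (-α) + c2 - c3 * t ^ β with hG_def
  -- relation g = t^α * G t for t > 0
  have hgG : ∀ t : ℝ, 0 < t → g t = t ^ α * G t := by
    intro t ht
    have e1 : t ^ α * t ^ (-α) = 1 := by
      rw [← Real.rpow_add ht]; simp
    have e2 : t ^ α * t ^ β = t ^ (α + β) := (Real.rpow_add ht _ _).symm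
    simp only [hg_def, hG_def]
    linear_combination (-c1) * e1 + c3 * e2
  -- G is strictly antitone on Ioi 0
  have hGanti : StrictAntiOn G (Set.Ioi (0:ℝ)) := by
    intro x hx y hy hxy
    simp only [Set.mem_Ioi] at hx hy
    have h1 : c1 * y ^ (-α) ≤ c1 * x ^ (-α) := by
      have hx' : (0:ℝ) < x ^ α := Real.rpow_pos_of_pos hx _
      have hy' : (0:ℝ) < y ^ α := Real.rpow_pos_of_pos hy _
      have : x ^ α ≤ y ^ α := Real.rpow_le_rpow hx.le hxy.le hα
      have hinv : (y ^ α)⁻¹ ≤ (x ^ α)⁻¹ := by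
        exact inv_anti₀ hx' this
      rw [Real.rpow_neg hx.le, Real.rpow_neg hy.le]
      exact mul_le_mul_of_nonneg_left hinv hc1.le
    have h2 : c3 * x ^ β < c3 * y ^ β := by
      have : x ^ β < y ^ β := Real.rpow_lt_rpow hx.le hxy hβ
      exact mul_lt_mul_of_pos_left this hc3
    simp only [hG_def]
    linarith
  -- continuity of G away from 0
  have hGcont : ∀ t : ℝ, t ≠ 0 → ContinuousAt G t := by
    intro t ht
    exact (((contAtRpow (-α) ht).const_mul c1).add continuousAt_const).sub
      ((contAtRpow β ht).const_mul c3)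
  -- continuity of Φ away from 0
  have hΦcont : ∀ t : ℝ, t ≠ 0 → ContinuousAt (fun t : ℝ =>
      a * t ^ (2 - p) * A + b * t ^ (2 * θ - p) * A' - t ^ (q - p) * B) t := by
    intro t ht
    exact ((((contAtRpow (2-p) ht).const_mul a).mul_const A).add
      (((contAtRpow (2*θ-p) ht).const_mul b).mul_const A')).sub
      ((contAtRpow (q-p) ht).mul_const B)
  -- existence of the zero of G
  have hlo : ∃ lo : ℝ, 0 < lo ∧ 0 < G lo := by
    have h : ∀ᶠ t in 𝓝[>] (0:ℝ), t ^ β < c2 / c3 :=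
      (tendsto_rpow_zero' β hβ).eventually_lt_const (show (0:ℝ) < c2 / c3 by positivity)
    have h2 := h.and self_mem_nhdsWithin
    rcases h2.exists with ⟨lo, hlo1, hlo2⟩
    refine ⟨lo, hlo2, ?_⟩
    have h3 : c3 * lo ^ β < c2 := by
      rw [← lt_div_iff₀' hc3]; exact hlo1
    have h4 : 0 < c1 * lo ^ (-α) := by positivity
    simp only [hG_def]; linarith
  obtain ⟨lo, hlo_pos, hGlo⟩ := hlo
  have hhi : ∃ hi : ℝ, lo < hi ∧ 1 ≤ hi ∧ G hi < 0 := by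
    have h1 : Tendsto (fun t : ℝ => t ^ β) atTop atTop := tendsto_rpow_atTop hβ
    have h2 : ∀ᶠ t : ℝ in atTop, (c1 + c2) / c3 < t ^ β := h1.eventually_gt_atTop _
    have h3 := (h2.and (eventually_gt_atTop lo)).and (eventually_ge_atTop (1:ℝ))
    rcases h3.exists with ⟨hi, ⟨hhi1, hhi2⟩, hhi3⟩
    refine ⟨hi, hhi2, hhi3, ?_⟩
    have h4 : c1 + c2 < c3 * hi ^ β := by
      rw [← div_lt_iff₀' hc3]; exact hhi1
    have h5 : hi ^ (-α) ≤ 1 :=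
      Real.rpow_le_one_of_one_le_of_nonpos hhi3 (by linarith)
    have h6 : c1 * hi ^ (-α) ≤ c1 := by nlinarith
    simp only [hG_def]; linarith
  obtain ⟨hi, hlohi, hhi1, hGhi⟩ := hhi
  have hGcontOn : ContinuousOn G (Set.Icc lo hi) := by
    intro t ht
    exact (hGcont t (lt_of_lt_of_le hlo_pos ht.1).ne').continuousWithinAt
  obtain ⟨tmax, htmax_mem, hGtmax⟩ :
      ∃ t ∈ Set.Icc lo hi, G t = 0 := by
    have := intermediate_value_Icc' hlohi.le hGcontOn
      (show (0:ℝ) ∈ Set.Icc (G hi) (G lo) from ⟨hGhi.le, hGlo.le⟩)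
    rcases this with ⟨t, ht, ht2⟩
    exact ⟨t, ht, ht2⟩
  have htmax_pos : 0 < tmax := lt_of_lt_of_le hlo_pos htmax_mem.1
  -- sign of G
  have hGpos : ∀ t : ℝ, 0 < t → t < tmax → 0 < G t := by
    intro t ht hlt
    have := hGanti (Set.mem_Ioi.2 ht) (Set.mem_Ioi.2 htmax_pos) hlt
    rw [hGtmax] at this; exact this
  have hGneg : ∀ t : ℝ, tmax < t → G t < 0 := by
    intro t hlt
    have := hGanti (Set.mem_Ioi.2 htmax_pos) (Set.mem_Ioi.2 (htmax_pos.trans hlt)) hlt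
    rw [hGtmax] at this; exact this
  -- derivative of Φ
  have hΦd : ∀ t : ℝ, 0 < t → HasDerivAt (fun t : ℝ =>
      a * t ^ (2 - p) * A + b * t ^ (2 * θ - p) * A' - t ^ (q - p) * B)
      (t ^ (1 - p) * g t) t := by
    intro t ht
    have h1 : HasDerivAt (fun t : ℝ => a * t ^ (2 - p) * A)
        (a * ((2 - p) * t ^ (2 - p - 1)) * A) t :=
      ((Real.hasDerivAt_rpow_const (Or.inl ht.ne')).const_mul a).mul_const A
    have h2 : HasDerivAt (fun t : ℝ => b * t ^ (2 * θ - p) * A')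
        (b * ((2 * θ - p) * t ^ (2 * θ - p - 1)) * A') t :=
      ((Real.hasDerivAt_rpow_const (Or.inl ht.ne')).const_mul b).mul_const A'
    have h3 : HasDerivAt (fun t : ℝ => t ^ (q - p) * B)
        ((q - p) * t ^ (q - p - 1) * B) t :=
      (Real.hasDerivAt_rpow_const (Or.inl ht.ne')).mul_const B
    have h := (h1.add h2).sub h3
    have hval : a * ((2 - p) * t ^ (2 - p - 1)) * A + b * ((2 * θ - p) * t ^ (2 * θ - p - 1)) * A'
        - (q - p) * t ^ (q - p - 1) * B = t ^ (1 - p) * g t := by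
      have e1 : t ^ (2 - p - 1) = t ^ (1 - p) := by congr 1; ring
      have e2 : t ^ (2 * θ - p - 1) = t ^ (1 - p) * t ^ α := by
        rw [← Real.rpow_add ht]; congr 1; simp [hα_def]; ring
      have e3 : t ^ (q - p - 1) = t ^ (1 - p) * t ^ (α + β) := by
        rw [← Real.rpow_add ht]; congr 1; simp [hα_def, hβ_def]; ring
      rw [e1, e2, e3]
      simp only [hg_def, hc1_def, hc2_def, hc3_def]
      ring
    rw [hval] at h
    exact h
  -- derivative sign
  have hderiv_pos : ∀ t : ℝ, 0 < t → t < tmax →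
      0 < deriv (fun t : ℝ =>
      a * t ^ (2 - p) * A + b * t ^ (2 * θ - p) * A' - t ^ (q - p) * B) t := by
    intro t ht hlt
    rw [(hΦd t ht).deriv]
    have h1 : 0 < t ^ (1 - p) := Real.rpow_pos_of_pos ht _
    have h2 : 0 < g t := by
      rw [hgG t ht]
      exact mul_pos (Real.rpow_pos_of_pos ht _) (hGpos t ht hlt)
    positivity
  have hderiv_neg : ∀ t : ℝ, tmax < t →
      deriv (fun t : ℝ =>
      a * t ^ (2 - p) * A + b * t ^ (2 * θ - p) * A' - t ^ (q - p) * B) t < 0 := by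
    intro t hlt
    have ht : 0 < t := htmax_pos.trans hlt
    rw [(hΦd t ht).deriv]
    have h1 : 0 < t ^ (1 - p) := Real.rpow_pos_of_pos ht _
    have h2 : g t < 0 := by
      rw [hgG t ht]
      exact mul_neg_of_pos_of_neg (Real.rpow_pos_of_pos ht _) (hGneg t hlt)
    exact mul_neg_of_pos_of_neg h1 h2
  -- monotonicity
  have hmono : StrictMonoOn (fun t : ℝ =>
      a * t ^ (2 - p) * A + b * t ^ (2 * θ - p) * A' - t ^ (q - p) * B)
      (Set.Ioc 0 tmax) := by
    apply strictMonoOn_of_deriv_pos (convex_Ioc 0 tmax)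
    · intro t ht
      exact (hΦcont t (ne_of_gt ht.1)).continuousWithinAt
    · intro t ht
      rw [interior_Ioc] at ht
      exact hderiv_pos t ht.1 ht.2
  have hanti : StrictAntiOn (fun t : ℝ =>
      a * t ^ (2 - p) * A + b * t ^ (2 * θ - p) * A' - t ^ (q - p) * B)
      (Set.Ici tmax) := by
    apply strictAntiOn_of_deriv_neg (convex_Ici tmax)
    · intro t ht
      exact (hΦcont t (ne_of_gt (lt_of_lt_of_le htmax_pos ht))).continuousWithinAt
    · intro t ht
      rw [interior_Ici] at ht
      exact hderiv_neg t ht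
  -- tendsto 0 at 0+
  have htend0 : Tendsto (fun t : ℝ =>
      a * t ^ (2 - p) * A + b * t ^ (2 * θ - p) * A' - t ^ (q - p) * B)
      (𝓝[>] (0 : ℝ)) (𝓝 0) := by
    have h := ((((tendsto_rpow_zero' _ hr1).const_mul a).mul_const A).add
      (((tendsto_rpow_zero' _ hr2).const_mul b).mul_const A')).sub
      ((tendsto_rpow_zero' _ hr3).mul_const B)
    simpa using h
  -- eventually positive
  have hevpos : ∀ᶠ t in 𝓝[>] (0 : ℝ), 0 < a * t ^ (2 - p) * A +
      b * t ^ (2 * θ - p) * A' - t ^ (q - p) * B := by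
    have h : ∀ᶠ t in 𝓝[>] (0:ℝ), t ^ (q - 2) < a * A / B :=
      (tendsto_rpow_zero' (q - 2) hq2).eventually_lt_const (show (0:ℝ) < a * A / B by positivity)
    filter_upwards [h, self_mem_nhdsWithin] with t ht1 ht2
    simp only [Set.mem_Ioi] at ht2
    have e : t ^ (q - p) = t ^ (2 - p) * t ^ (q - 2) := by
      rw [← Real.rpow_add ht2]; congr 1; ring
    have h1 : t ^ (q - 2) * B < a * A := by
      rw [← lt_div_iff₀ hB]; exact ht1
    have h2 : 0 < t ^ (2 - p) := Real.rpow_pos_of_pos ht2 _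
    have h3 : t ^ (q - p) * B < a * t ^ (2 - p) * A := by
      rw [e]
      calc t ^ (2 - p) * t ^ (q - 2) * B = t ^ (2 - p) * (t ^ (q - 2) * B) := by ring
        _ < t ^ (2 - p) * (a * A) := by exact mul_lt_mul_of_pos_left h1 h2
        _ = a * t ^ (2 - p) * A := by ring
    have h4 : 0 < b * t ^ (2 * θ - p) * A' := by
      have := Real.rpow_pos_of_pos ht2 (2 * θ - p); positivity
    linarith
  -- tendsto atBot
  have htendbot : Tendsto (fun t : ℝ =>
      a * t ^ (2 - p) * A + b * t ^ (2 * θ - p) * A' - t ^ (q - p) * B)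
      atTop atBot := by
    have h1 : Tendsto (fun t : ℝ => t ^ (q - p)) atTop atTop :=
      tendsto_rpow_atTop hr3
    have h2 : Tendsto (fun t : ℝ =>
        a * t ^ (2 - q) * A + b * t ^ (2 * θ - q) * A' - B) atTop (𝓝 (-B)) := by
      have e1 : Tendsto (fun t : ℝ => t ^ (2 - q)) atTop (𝓝 0) := by
        have := tendsto_rpow_neg_atTop hq2
        simpa [show -(q-2) = 2 - q by ring] using this
      have e2 : Tendsto (fun t : ℝ => t ^ (2 * θ - q)) atTop (𝓝 0) := by
        have := tendsto_rpow_neg_atTop hβ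
        simpa [show -β = 2 * θ - q by rw [hβ_def]; ring] using this
      have h := (((e1.const_mul a).mul_const A).add
        ((e2.const_mul b).mul_const A')).sub_const B
      simpa using h
    have h3 := h1.atTop_mul_neg (by linarith : -B < 0) h2
    apply h3.congr'
    filter_upwards [eventually_gt_atTop (0:ℝ)] with t ht
    have e1 : t ^ (q - p) * (a * t ^ (2 - q) * A) = a * t ^ (2 - p) * A := by
      rw [show t ^ (q-p) * (a * t ^ (2-q) * A) = a * (t ^ (q-p) * t ^ (2-q)) * A by ring,
        ← Real.rpow_add ht]
      norm_num
    have e2 : t ^ (q - p) * (b * t ^ (2 * θ - q) * A') = b * t ^ (2 * θ - p) * A' := by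
      rw [show t ^ (q-p) * (b * t ^ (2*θ-q) * A') = b * (t ^ (q-p) * t ^ (2*θ-q)) * A' by ring,
        ← Real.rpow_add ht]
      ring_nf
    calc t ^ (q - p) * (a * t ^ (2 - q) * A + b * t ^ (2 * θ - q) * A' - B)
        = t ^ (q-p) * (a * t ^ (2-q) * A) + t ^ (q-p) * (b * t ^ (2*θ-q) * A')
          - t ^ (q-p) * B := by ring
      _ = a * t ^ (2 - p) * A + b * t ^ (2 * θ - p) * A' - t ^ (q - p) * B := by
          rw [e1, e2]
  set Φ' : ℝ → ℝ := fun t : ℝ =>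
      a * t ^ (2 - p) * A + b * t ^ (2 * θ - p) * A' - t ^ (q - p) * B with hΦ'_def
  have hΦ'contOn : ∀ s : Set ℝ, s ⊆ Set.Ioi (0:ℝ) → ContinuousOn Φ' s := by
    intro s hs t ht
    exact (hΦcont t (ne_of_gt (hs ht))).continuousWithinAt
  have hlt_max : ∀ t : ℝ, 0 < t → t ≠ tmax → Φ' t < Φ' tmax := by
    intro t ht hne
    rcases lt_or_gt_of_ne hne with h | h
    · exact hmono ⟨ht, h.le⟩ ⟨htmax_pos, le_refl _⟩ h
    · exact hanti (Set.mem_Ici.2 (le_refl _)) (Set.mem_Ici.2 h.le) h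
  have hΦtmax_pos : 0 < Φ' tmax := by
    have h1 : ∀ᶠ t in 𝓝[>] (0:ℝ), t < tmax := by
      filter_upwards [mem_nhdsWithin_of_mem_nhds (Iio_mem_nhds htmax_pos)] with t ht
      exact ht
    rcases ((hevpos.and h1).and self_mem_nhdsWithin).exists with ⟨t0, ⟨h2, h3⟩, h4⟩
    exact h2.trans (hlt_max t0 h4 h3.ne)
  refine ⟨htend0, hevpos, htendbot, tmax, htmax_pos, hΦtmax_pos, hlt_max, ?_⟩
  intro μ hμ hμlt
  -- find tp
  have h1 : ∀ᶠ t in 𝓝[>] (0:ℝ), Φ' t < μ := htend0.eventually_lt_const hμ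
  have h2 : ∀ᶠ t in 𝓝[>] (0:ℝ), t < tmax := by
    filter_upwards [mem_nhdsWithin_of_mem_nhds (Iio_mem_nhds htmax_pos)] with t ht
    exact ht
  rcases ((h1.and h2).and self_mem_nhdsWithin).exists with ⟨t0, ⟨h3, h4⟩, h5⟩
  have h5 : 0 < t0 := h5
  have hcont1 : ContinuousOn Φ' (Set.Icc t0 tmax) :=
    hΦ'contOn _ (fun x hx => lt_of_lt_of_le h5 hx.1)
  obtain ⟨tp, htp_mem, htp_eq⟩ := intermediate_value_Ioo h4.le hcont1
    (show μ ∈ Set.Ioo (Φ' t0) (Φ' tmax) from ⟨h3, hμlt⟩)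
  -- find tm
  have h6 : ∀ᶠ t in atTop, Φ' t < μ := htendbot.eventually (eventually_lt_atBot μ)
  rcases (h6.and (eventually_gt_atTop tmax)).exists with ⟨t1, h7, h8⟩
  have hcont2 : ContinuousOn Φ' (Set.Icc tmax t1) :=
    hΦ'contOn _ (fun x hx => lt_of_lt_of_le htmax_pos hx.1)
  obtain ⟨tm, htm_mem, htm_eq⟩ := intermediate_value_Ioo' h8.le hcont2
    (show μ ∈ Set.Ioo (Φ' t1) (Φ' tmax) from ⟨h7, hμlt⟩)
  have htp_pos : 0 < tp := h5.trans htp_mem.1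
  refine ⟨tp, tm, htp_pos, htp_mem.2, htm_mem.1, htp_eq, htm_eq, ?_⟩
  intro t ht htμ
  have htne : t ≠ tmax := by
    intro h; rw [h] at htμ; exact absurd htμ.symm (ne_of_lt hμlt)
  rcases lt_or_gt_of_ne htne with h | h
  · left
    exact hmono.injOn ⟨ht, h.le⟩ ⟨htp_pos, htp_mem.2.le⟩ (by rw [htμ, htp_eq])
  · right
    exact hanti.injOn (Set.mem_Ici.2 h.le) (Set.mem_Ici.2 htm_mem.1.le) (by rw [htμ, htm_eq])
end

section
/- Let $a,b>0$, $1<p<2\le 2\theta<q$, $\lambda>0$, and let $R,P,Q$ be reals with $R>0$, $Q\ge 0$, satisfying $aR+bR^{\theta}=\lambda P+Q$ and additionally the $\mathcal N^+$ condition $(2-p)aR+(2\theta-p)bR^{\theta}>(q-p)Q$. Then $J:=\left(\frac12-\frac1q\right)aR+\left(\frac1{2\theta}-\frac1q\right)bR^{\theta}-\lambda\left(\frac1p-\frac1q\right)P<0$. Consequently $\inf_{\mathcal N^+_\lambda}J_\lambda<0$. -/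
set_option maxHeartbeats 1000000


theorem stmt_10 (a b p θ q lam R P Q : ℝ) (ha : 0 < a) (hb : 0 < b)
    (hp1 : 1 < p) (hp2 : p < 2) (hθ : 2 ≤ 2 * θ) (hθq : 2 * θ < q)
    (hlam : 0 < lam) (hR : 0 < R) (hQ : 0 ≤ Q)
    (hNehari : a * R + b * R ^ θ = lam * P + Q)
    (hNplus : (q - p) * Q < (2 - p) * a * R + (2 * θ - p) * b * R ^ θ) :
    (1 / 2 - 1 / q) * a * R + (1 / (2 * θ) - 1 / q) * b * R ^ θ
      - lam * (1 / p - 1 / q) * P < 0 := by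
  have hBpos : 0 < b * R ^ θ := mul_pos hb (Real.rpow_pos_of_pos hR θ)
  have hApos : 0 < a * R := mul_pos ha hR
  have hθ0 : (0:ℝ) < θ := by linarith
  have hq0 : (0:ℝ) < q := by linarith
  have hp0 : (0:ℝ) < p := by linarith
  have hqp : (0:ℝ) < q - p := by linarith
  have hlamP : lam * P = a * R + b * R ^ θ - Q := by linarith
  have hrw : lam * (1 / p - 1 / q) * P
      = (1 / p - 1 / q) * (a * R + b * R ^ θ - Q) := by
    rw [← hlamP]; ring
  rw [hrw]
  have h1 : (1 / 2 - 1 / q) * a * R + (1 / (2 * θ) - 1 / q) * b * R ^ θ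
        - (1 / p - 1 / q) * (a * R + b * R ^ θ - Q)
      = (1 / 2 - 1 / p) * (a * R) + (1 / (2 * θ) - 1 / p) * (b * R ^ θ)
        + (1 / p - 1 / q) * Q := by ring
  rw [h1]
  have hpq : 0 < 1 / p - 1 / q := by
    rw [sub_pos, div_lt_div_iff₀ hq0 hp0]
    nlinarith
  have hQlt : Q < ((2 - p) * (a * R) + (2 * θ - p) * (b * R ^ θ)) / (q - p) := by
    rw [lt_div_iff₀ hqp]
    nlinarith [hNplus]
  have h2 : (1 / 2 - 1 / p) * (a * R) + (1 / (2 * θ) - 1 / p) * (b * R ^ θ)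
        + (1 / p - 1 / q) * Q
      < (1 / 2 - 1 / p) * (a * R) + (1 / (2 * θ) - 1 / p) * (b * R ^ θ)
        + (1 / p - 1 / q)
          * (((2 - p) * (a * R) + (2 * θ - p) * (b * R ^ θ)) / (q - p)) := by
    have := mul_lt_mul_of_pos_left hQlt hpq
    linarith
  refine h2.trans_le ?_
  have hcA : (1 / 2 - 1 / p) + (1 / p - 1 / q) * (2 - p) / (q - p) ≤ 0 := by
    have heq : (1 / 2 - 1 / p) + (1 / p - 1 / q) * (2 - p) / (q - p)
        = (2 - p) * (2 - q) / (2 * p * q) := by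
      field_simp
      ring
    rw [heq]
    apply div_nonpos_of_nonpos_of_nonneg
    · nlinarith
    · positivity
  have hcB : (1 / (2 * θ) - 1 / p) + (1 / p - 1 / q) * (2 * θ - p) / (q - p) ≤ 0 := by
    have heq : (1 / (2 * θ) - 1 / p) + (1 / p - 1 / q) * (2 * θ - p) / (q - p)
        = (2 * θ - p) * (2 * θ - q) / (2 * θ * p * q) := by
      field_simp
      ring
    rw [heq]
    apply div_nonpos_of_nonpos_of_nonneg
    · exact mul_nonpos_of_nonneg_of_nonpos (by linarith) (by linarith)
    · positivity
  have key : (1 / 2 - 1 / p) * (a * R) + (1 / (2 * θ) - 1 / p) * (b * R ^ θ)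
        + (1 / p - 1 / q)
          * (((2 - p) * (a * R) + (2 * θ - p) * (b * R ^ θ)) / (q - p))
      = ((1 / 2 - 1 / p) + (1 / p - 1 / q) * (2 - p) / (q - p)) * (a * R)
        + ((1 / (2 * θ) - 1 / p) + (1 / p - 1 / q) * (2 * θ - p) / (q - p))
          * (b * R ^ θ) := by
    field_simp
    ring
  rw [key]
  have t1 := mul_nonpos_of_nonpos_of_nonneg hcA hApos.le
  have t2 := mul_nonpos_of_nonpos_of_nonneg hcB hBpos.le
  linarith
end

section
/- Let $1<p<2\le 2\theta<q$, $b>0$, $S>0$, $\|f\|>0$, and set $\Lambda_1=\left(\frac{q-2\theta}{2\theta-p}\right)\left(\frac{b(2\theta-p)}{q-p}\right)^{\frac{q-p}{q-2\theta}}\big(S^{q/2}\big)^{\frac{2\theta-p}{q-2\theta}}\frac{S^{p/2}}{\|f\|}$. Suppose $u$ satisfies the Sobolev-type bounds $\int|u|^{q}\le S^{-q/2}\rho(u)^{q}$ and $\int f|u|^{p}\le S^{-p/2}\|f\|\rho(u)^{p}$ with $\rho(u)>0$. Then for every $\lambda\in(0,\Lambda_1)$, $\max_{t>0}\left[a t^{2-p}\rho(u)^2+b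 t^{2\theta-p}\rho(u)^{2\theta}-t^{q-p}\int|u|^{q}\right]>\lambda\int f|u|^{p}$ for any $a>0$. -/
theorem stmt_17 (b p θ q S normf : ℝ) (hb : 0 < b)
    (hp1 : 1 < p) (hp2 : p < 2) (hθ : 2 ≤ 2 * θ) (hθq : 2 * θ < q)
    (hS : 0 < S) (hnormf : 0 < normf)
    (Λ₁ : ℝ)
    (hΛ₁ : Λ₁ = ((q - 2 * θ) / (2 * θ - p))
        * (b * (2 * θ - p) / (q - p)) ^ ((q - p) / (q - 2 * θ))
        * (S ^ (q / 2)) ^ ((2 * θ - p) / (q - 2 * θ)) * S ^ (p / 2) / normf)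
    (ρ Iq If : ℝ) (hρ : 0 < ρ)
    (hIq : Iq ≤ S ^ (-(q / 2)) * ρ ^ q)
    (hIf : If ≤ S ^ (-(p / 2)) * normf * ρ ^ p) :
    ∀ lam : ℝ, 0 < lam → lam < Λ₁ → ∀ a : ℝ, 0 < a →
      ∃ t : ℝ, 0 < t ∧
        lam * If < a * t ^ (2 - p) * ρ ^ 2 + b * t ^ (2 * θ - p) * ρ ^ (2 * θ)
          - t ^ (q - p) * Iq := by
  intro lam hlam hlamΛ a ha
  have hα : 0 < 2 * θ - p := by linarith
  have hβ : 0 < q - p := by linarith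
  have hγ : 0 < q - 2 * θ := by linarith
  have hc : 0 < b * (2 * θ - p) / (q - p) := by positivity
  set c := b * (2 * θ - p) / (q - p) with hcdef
  set K := c * S ^ (q / 2) * ρ ^ (2 * θ - q) with hKdef
  have hK : 0 < K := by positivity
  refine ⟨K ^ ((1:ℝ) / (q - 2 * θ)), Real.rpow_pos_of_pos hK _, ?_⟩
  set t := K ^ ((1:ℝ) / (q - 2 * θ)) with htdef
  have ht : 0 < t := Real.rpow_pos_of_pos hK _
  have htα : t ^ (2 * θ - p) = K ^ ((2 * θ - p) / (q - 2 * θ)) := by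
    rw [htdef, ← Real.rpow_mul hK.le, one_div_mul_eq_div]
  have htβ : t ^ (q - p) = K ^ ((2 * θ - p) / (q - 2 * θ)) * K := by
    rw [htdef, ← Real.rpow_mul hK.le, one_div_mul_eq_div,
      show (q - p) / (q - 2 * θ) = (2 * θ - p) / (q - 2 * θ) + 1 by
        (field_simp; ring), Real.rpow_add hK, Real.rpow_one]
  have hKS : K * (S ^ (-(q / 2)) * ρ ^ q) = c * ρ ^ (2 * θ) := by
    have h1 : S ^ (q / 2) * S ^ (-(q / 2)) = 1 := by
      rw [← Real.rpow_add hS]; simp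
    have h2 : ρ ^ (2 * θ - q) * ρ ^ q = ρ ^ (2 * θ) := by
      rw [← Real.rpow_add hρ]; ring_nf
    calc K * (S ^ (-(q / 2)) * ρ ^ q)
        = c * (S ^ (q / 2) * S ^ (-(q / 2))) * (ρ ^ (2 * θ - q) * ρ ^ q) := by
          rw [hKdef]; ring
      _ = c * ρ ^ (2 * θ) := by rw [h1, h2, mul_one]
  have hE : K ^ ((2 * θ - p) / (q - 2 * θ))
      = c ^ ((2 * θ - p) / (q - 2 * θ)) * (S ^ (q / 2)) ^ ((2 * θ - p) / (q - 2 * θ))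
        * ρ ^ (-(2 * θ - p)) := by
    rw [hKdef, Real.mul_rpow (by positivity) (by positivity),
      Real.mul_rpow (by positivity) (by positivity),
      ← Real.rpow_mul hρ.le,
      show (2 * θ - q) * ((2 * θ - p) / (q - 2 * θ)) = -(2 * θ - p) by
        field_simp; ring]
  have hmain : Λ₁ * (S ^ (-(p / 2)) * normf * ρ ^ p)
      = b * t ^ (2 * θ - p) * ρ ^ (2 * θ) - t ^ (q - p) * (S ^ (-(q / 2)) * ρ ^ q) := by
    have hcβ : c ^ ((q - p) / (q - 2 * θ)) = c ^ ((2 * θ - p) / (q - 2 * θ)) * c := by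
      rw [show (q - p) / (q - 2 * θ) = (2 * θ - p) / (q - 2 * θ) + 1 by (field_simp; ring),
        Real.rpow_add hc, Real.rpow_one]
    have hρp : ρ ^ (-(2 * θ - p)) * ρ ^ (2 * θ) = ρ ^ p := by
      rw [← Real.rpow_add hρ]; ring_nf
    have hR : b * t ^ (2 * θ - p) * ρ ^ (2 * θ) - t ^ (q - p) * (S ^ (-(q / 2)) * ρ ^ q)
        = (b - c) * (c ^ ((2 * θ - p) / (q - 2 * θ))
            * (S ^ (q / 2)) ^ ((2 * θ - p) / (q - 2 * θ)) * ρ ^ p) := by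
      rw [htα, htβ]
      linear_combination (-(K ^ ((2 * θ - p) / (q - 2 * θ)))) * hKS
        + ((b - c) * ρ ^ (2 * θ)) * hE
        + ((b - c) * c ^ ((2 * θ - p) / (q - 2 * θ))
            * (S ^ (q / 2)) ^ ((2 * θ - p) / (q - 2 * θ))) * hρp
    have hcancel : S ^ (p / 2) / normf * (S ^ (-(p / 2)) * normf) = 1 := by
      rw [Real.rpow_neg hS.le]
      field_simp
    have hbc2 : (q - 2 * θ) / (2 * θ - p) * c = b - c := by
      rw [hcdef]; field_simp; ring
    calc Λ₁ * (S ^ (-(p / 2)) * normf * ρ ^ p)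
        = ((q - 2 * θ) / (2 * θ - p) * c) * (c ^ ((2 * θ - p) / (q - 2 * θ))
            * (S ^ (q / 2)) ^ ((2 * θ - p) / (q - 2 * θ)) * ρ ^ p)
            * (S ^ (p / 2) / normf * (S ^ (-(p / 2)) * normf)) := by
          rw [hΛ₁, hcβ]; ring
      _ = (b - c) * (c ^ ((2 * θ - p) / (q - 2 * θ))
            * (S ^ (q / 2)) ^ ((2 * θ - p) / (q - 2 * θ)) * ρ ^ p) := by
          rw [hcancel, hbc2]; ring
      _ = _ := hR.symm
  have h1 : lam * If ≤ lam * (S ^ (-(p / 2)) * normf * ρ ^ p) :=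
    mul_le_mul_of_nonneg_left hIf hlam.le
  have h2 : lam * (S ^ (-(p / 2)) * normf * ρ ^ p)
      < Λ₁ * (S ^ (-(p / 2)) * normf * ρ ^ p) := by
    apply mul_lt_mul_of_pos_right hlamΛ
    positivity
  have h3 : t ^ (q - p) * Iq ≤ t ^ (q - p) * (S ^ (-(q / 2)) * ρ ^ q) :=
    mul_le_mul_of_nonneg_left hIq (Real.rpow_pos_of_pos ht _).le
  have h4 : 0 < a * t ^ (2 - p) * ρ ^ 2 := by positivity
  linarith
end
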